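/- arXiv:2602.19032 — 2 statements merged into one kernel-verified Lean document; each statement's English description precedes it below -/
import Mathlib

section
/- For every τ in the upper half-plane, δ2(-1/τ) = τ^2 δ1(τ). -/
open Complex Real

/-- The nome `q = e^{2πiτ}`. -/
noncomputable def qq (τ : ℂ) : ℂ := Complex.exp (2 * π * Complex.I * τ)

/-- The half-nome `q^{1/2} = e^{πiτ}`. -/
noncomputable def qh (τ : ℂ) : ℂ := Complex.exp (π * Complex.I * τ)

/-- The Jacobi theta constant `θ₁(0,τ) = 2 q^{1/8} ∏_{j≥1} (1-q^j)(1+q^j)^2`. -/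
noncomputable def theta1 (τ : ℂ) : ℂ :=
  2 * Complex.exp (π * Complex.I * τ / 4) *
    ∏' j : ℕ, ((1 - qq τ ^ (j + 1)) * (1 + qq τ ^ (j + 1)) ^ 2)

/-- The Jacobi theta constant `θ₂(0,τ) = ∏_{j≥1} (1-q^j)(1-q^{j-1/2})^2`. -/
noncomputable def theta2 (τ : ℂ) : ℂ :=
  ∏' j : ℕ, ((1 - qq τ ^ (j + 1)) * (1 - qh τ ^ (2 * j + 1)) ^ 2)

/-- The Jacobi theta constant `θ₃(0,τ) = ∏_{j≥1} (1-q^j)(1+q^{j-1/2})^2`. -/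
noncomputable def theta3 (τ : ℂ) : ℂ :=
  ∏' j : ℕ, ((1 - qq τ ^ (j + 1)) * (1 + qh τ ^ (2 * j + 1)) ^ 2)

/-- `δ₁(τ) = (θ₂(0,τ)⁴ + θ₃(0,τ)⁴)/8`. -/
noncomputable def delta1 (τ : ℂ) : ℂ := (theta2 τ ^ 4 + theta3 τ ^ 4) / 8

/-- `δ₂(τ) = -(θ₁(0,τ)⁴ + θ₃(0,τ)⁴)/8`. -/
noncomputable def delta2 (τ : ℂ) : ℂ := -(theta1 τ ^ 4 + theta3 τ ^ 4) / 8


open Finset Filter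


/-! ### Convergence helpers -/

lemma summable_log_one_add {f : ℕ → ℂ} (hf : Summable f) :
    Summable (fun n ↦ Complex.log (1 + f n)) := by
  have hnorm : Summable (fun n ↦ (3/2 : ℝ) * ‖f n‖) := (hf.norm).mul_left _
  apply Summable.of_norm_bounded_eventually_nat hnorm
  have h0 : Filter.Tendsto (fun n ↦ ‖f n‖) Filter.atTop (nhds 0) := hf.norm.tendsto_atTop_zero
  have hev : ∀ᶠ n in Filter.atTop, ‖f n‖ ≤ 1/2 :=
    h0.eventually_le_const (by norm_num : (0:ℝ) < 1/2)
  filter_upwards [hev] with n hn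
  exact Complex.norm_log_one_add_half_le_self hn

lemma one_add_ne {z : ℂ} (hz : ‖z‖ < 1) : 1 + z ≠ 0 := by
  intro h
  have : z = -1 := by linear_combination h
  simp [this] at hz

lemma hasProd_one_add {f : ℕ → ℂ} (hf : Summable f) (h1 : ∀ n, ‖f n‖ < 1) :
    HasProd (fun n ↦ 1 + f n) (∏' n, (1 + f n)) ∧ (∏' n, (1 + f n)) ≠ 0 := by
  have hlog := summable_log_one_add hf
  have hne : ∀ n, (1 : ℂ) + f n ≠ 0 := fun n ↦ one_add_ne (h1 n)
  have hp := (Complex.multipliable_of_summable_log hlog).hasProd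
  have he := Complex.cexp_tsum_eq_tprod hne hlog
  exact ⟨hp, by rw [← he]; exact Complex.exp_ne_zero _⟩

lemma summable_geom_aux {x : ℂ} (hx : ‖x‖ < 1) (a : ℂ) (d : ℕ) :
    Summable (fun j : ℕ ↦ a * x ^ (2 * j + d)) := by
  have h2 : ‖x ^ 2‖ < 1 := by
    rw [norm_pow]
    exact pow_lt_one₀ (norm_nonneg x) hx (by norm_num)
  have := (summable_geometric_of_norm_lt_one h2).mul_left (a * x ^ d)
  refine this.congr fun j ↦ ?_
  rw [← pow_mul]
  ring

lemma norm_term_lt_one {x : ℂ} (hx : ‖x‖ < 1) {a : ℂ} (ha : ‖a‖ ≤ 1) (j d : ℕ) (hd : 1 ≤ d) :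
    ‖a * x ^ (2 * j + d)‖ < 1 := by
  rw [norm_mul, norm_pow]
  calc ‖a‖ * ‖x‖ ^ (2 * j + d) ≤ 1 * ‖x‖ ^ (2 * j + d) := by
        apply mul_le_mul_of_nonneg_right ha (by positivity)
    _ = ‖x‖ ^ (2 * j + d) := one_mul _
    _ < 1 := pow_lt_one₀ (norm_nonneg x) hx (by omega)

lemma hasProd_geom {x : ℂ} (hx : ‖x‖ < 1) {a : ℂ} (ha : ‖a‖ ≤ 1) (d : ℕ) (hd : 1 ≤ d) :
    HasProd (fun j : ℕ ↦ 1 + a * x ^ (2 * j + d)) (∏' j : ℕ, (1 + a * x ^ (2 * j + d))) ∧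
      (∏' j : ℕ, (1 + a * x ^ (2 * j + d))) ≠ 0 :=
  hasProd_one_add (summable_geom_aux hx a d) (fun j ↦ norm_term_lt_one hx ha j d hd)
noncomputable def AA (q : ℂ) (M : ℕ) : ℂ := ∏ i ∈ Finset.range M, (1 - q ^ (i + 1))

noncomputable def gb (q : ℂ) (N k : ℕ) : ℂ :=
  (∏ i ∈ Finset.range k, (1 - q ^ (N - i))) / AA q k

section qbin
variable {q : ℂ} (hq : ‖q‖ < 1)
include hq

lemma one_sub_pow_ne (i : ℕ) (hi : 1 ≤ i) : 1 - q ^ i ≠ 0 := by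
  intro h
  have h1 : q ^ i = 1 := by linear_combination -h
  have : ‖q ^ i‖ < 1 := by
    rw [norm_pow]; exact pow_lt_one₀ (norm_nonneg q) hq (by omega)
  rw [h1] at this; simp at this

lemma AA_ne (M : ℕ) : AA q M ≠ 0 :=
  Finset.prod_ne_zero_iff.2 fun i _ ↦ one_sub_pow_ne hq (i + 1) (by omega)

omit hq in
lemma num_eq_zero {N k : ℕ} (h : N < k) :
    (∏ i ∈ Finset.range k, (1 - q ^ (N - i))) = 0 := by
  apply Finset.prod_eq_zero (Finset.mem_range.2 h)
  simp [Nat.sub_self]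

omit hq in
lemma gb_eq_zero {N k : ℕ} (h : N < k) : gb q N k = 0 := by
  rw [gb, num_eq_zero h, zero_div]

omit hq in
lemma gb_zero_right (N : ℕ) : gb q N 0 = 1 := by simp [gb, AA]

lemma gb_pascal (N k : ℕ) :
    gb q (N + 1) (k + 1) = gb q N (k + 1) + q ^ (N - k) * gb q N k := by
  rcases le_or_gt k N with hk | hk
  · set P := ∏ i ∈ Finset.range k, (1 - q ^ (N - i)) with hP
    have hnum1 : (∏ i ∈ Finset.range (k+1), (1 - q ^ (N + 1 - i)))
        = (1 - q ^ (N + 1)) * P := by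
      rw [Finset.prod_range_succ']
      simp only [Nat.sub_zero]
      rw [mul_comm]
      congr 1
      apply Finset.prod_congr rfl
      intro i _
      congr 2
      omega
    have hnum2 : (∏ i ∈ Finset.range (k+1), (1 - q ^ (N - i)))
        = P * (1 - q ^ (N - k)) := Finset.prod_range_succ _ _
    have hA : AA q (k+1) = AA q k * (1 - q ^ (k+1)) := Finset.prod_range_succ _ _
    have hpow : q ^ (N - k) * q ^ (k + 1) = q ^ (N + 1) := by
      rw [← pow_add]; congr 1; omega
    have hAne := AA_ne hq k
    have hkne := one_sub_pow_ne hq (k+1) (by omega)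
    have key : (1 - q^(N+1)) * P
        = P * (1 - q^(N-k)) + q^(N-k) * P * (1 - q^(k+1)) := by
      linear_combination P * hpow
    rw [gb, gb, gb, ← hP, hnum1, hnum2, hA, key, add_div]
    congr 1
    rw [mul_comm (AA q k) (1 - q^(k+1)), mul_comm (q^(N-k) * P) (1 - q^(k+1)),
      mul_div_mul_left _ _ hkne, mul_div_assoc]
  · rw [gb_eq_zero (by omega : N + 1 < k + 1), gb_eq_zero (by omega : N < k + 1),
      gb_eq_zero hk]
    simp

theorem qbinom (u : ℂ) (N : ℕ) :
    ∏ j ∈ Finset.range N, (1 + u * q ^ j)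
      = ∑ k ∈ Finset.range (N + 1), q ^ (Nat.choose k 2) * gb q N k * u ^ k := by
  induction N with
  | zero => simp [gb_zero_right]
  | succ N ih =>
    have hchoose : ∀ k : ℕ, Nat.choose (k+1) 2 = Nat.choose k 2 + k := fun k ↦ by
      rw [Nat.choose_succ_succ k 1, Nat.choose_one_right, add_comm]
    set t : ℕ → ℂ := fun k ↦ q ^ (Nat.choose k 2) * gb q N k * u ^ k with ht
    have hRHS : ∑ k ∈ Finset.range (N + 2), q ^ (Nat.choose k 2) * gb q (N+1) k * u ^ k
        = (∑ k ∈ Finset.range (N + 1),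
            q ^ (Nat.choose (k+1) 2) * gb q (N+1) (k+1) * u ^ (k+1)) + 1 := by
      rw [Finset.sum_range_succ']
      simp [gb_zero_right]
    have hsplit : ∀ k ∈ Finset.range (N+1),
        q ^ (Nat.choose (k+1) 2) * gb q (N+1) (k+1) * u ^ (k+1)
          = q ^ (Nat.choose (k+1) 2) * gb q N (k+1) * u ^ (k+1) + t k * (u * q ^ N) := by
      intro k hk
      have hk' : k ≤ N := by simpa using Nat.lt_succ_iff.mp (Finset.mem_range.1 hk)
      rw [gb_pascal hq]
      have hexp : q ^ (Nat.choose (k+1) 2) * q ^ (N - k) = q ^ (Nat.choose k 2) * q ^ N := by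
        rw [← pow_add, ← pow_add]; congr 1; rw [hchoose]; omega
      simp only [ht]
      linear_combination gb q N k * u ^ (k + 1) * hexp
    have h2 := Finset.sum_congr rfl hsplit
    rw [Finset.prod_range_succ, ih, hRHS, h2, Finset.sum_add_distrib]
    have ht0 : t 0 = 1 := by simp [ht, gb_zero_right]
    have htN : t (N+1) = 0 := by simp [ht, gb_eq_zero (Nat.lt_succ_self N)]
    have hS1 : (∑ k ∈ Finset.range (N+1),
        q ^ (Nat.choose (k+1) 2) * gb q N (k+1) * u ^ (k+1)) + 1
        = ∑ k ∈ Finset.range (N+1), t k := by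
      have h3 := Finset.sum_range_succ' t (N+1)
      have h4 := Finset.sum_range_succ t (N+1)
      rw [htN, add_zero] at h4
      rw [h4, ht0] at h3
      simpa [ht] using h3.symm
    rw [add_right_comm, hS1, ← Finset.sum_mul]
    ring

end qbin

lemma two_mul_choose_two (k : ℕ) : 2 * Nat.choose k 2 = k * (k - 1) := by
  induction k with
  | zero => rfl
  | succ n ih =>
    rw [Nat.choose_succ_succ n 1, Nat.choose_one_right, Nat.mul_add, ih, Nat.add_sub_cancel]
    cases n with
    | zero => rfl
    | succ m => rw [Nat.add_sub_cancel]; ring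

lemma prod_zpow_eq {x : ℂ} (hx0 : x ≠ 0) (f : ℕ → ℤ) (N : ℕ) :
    ∏ j ∈ Finset.range N, x ^ (f j) = x ^ (∑ j ∈ Finset.range N, f j) := by
  induction N with
  | zero => simp
  | succ n ih => rw [Finset.prod_range_succ, Finset.sum_range_succ, ih, zpow_add₀ hx0]

theorem bilateral {x w : ℂ} (hx : ‖x‖ < 1) (hx0 : x ≠ 0) (hw : w ≠ 0) (N : ℕ) :
    ∏ m ∈ Finset.range N, ((1 + w * x ^ (2*m+1)) * (1 + w⁻¹ * x ^ (2*m+1)))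
      = ∑ k ∈ Finset.range (2*N+1), gb (x^2) (2*N) k * x ^ (((k:ℤ) - N)^2) * w ^ ((k:ℤ) - N) := by
  have hq : ‖x^2‖ < 1 := by
    rw [norm_pow]; exact pow_lt_one₀ (norm_nonneg x) hx (by norm_num)
  have hqb := qbinom hq (w * x ^ ((1:ℤ) - 2*N)) (2*N)
  -- rewrite factors of the q-binomial LHS
  have hfac : ∀ j : ℕ, 1 + (w * x ^ ((1:ℤ) - 2*N)) * (x^2) ^ j
      = 1 + w * x ^ ((2*(j:ℤ)+1) - 2*N) := by
    intro j
    congr 1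
    rw [← pow_mul, ← zpow_natCast x (2*j), mul_assoc, ← zpow_add₀ hx0]
    congr 1
    push_cast; ring
  -- split the product over range (2N)
  have hsplit : ∀ e : ℤ, 1 + w * x ^ e = (w * x ^ e) * (1 + w⁻¹ * x ^ (-e)) := by
    intro e
    have h1 : x ^ e * x ^ (-e) = 1 := by rw [← zpow_add₀ hx0]; simp
    have h2 : w * w⁻¹ = 1 := mul_inv_cancel₀ hw
    linear_combination (-(w * w⁻¹)) * h1 - h2
  -- sum of exponents
  have hsum : ∑ j ∈ Finset.range N, ((2*(j:ℤ)+1) - 2*(N:ℤ)) = -(N:ℤ)^2 := by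
    have h0 : (∑ j ∈ Finset.range N, (j:ℤ)) * 2 = (N:ℤ) * ((N:ℤ) - 1) := by
      cases N with
      | zero => simp
      | succ M =>
        have h' := Finset.sum_range_id_mul_two (M+1)
        have h'' : ((∑ i ∈ Finset.range (M+1), i : ℕ) : ℤ) * 2
            = (((M+1) * (M+1-1) : ℕ) : ℤ) := by exact_mod_cast congrArg (Nat.cast (R := ℤ)) h'
        rw [Nat.cast_sum] at h''
        push_cast at h'' ⊢
        linarith [h'']
    have h1 : ∑ j ∈ Finset.range N, ((2*(j:ℤ)+1) - 2*(N:ℤ))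
        = 2 * ∑ j ∈ Finset.range N, (j:ℤ) + (N:ℤ) * (1 - 2*(N:ℤ)) := by
      have hc : ∀ j ∈ Finset.range N, (2*(j:ℤ)+1) - 2*(N:ℤ) = 2*(j:ℤ) + (1 - 2*(N:ℤ)) :=
        fun _ _ => by ring
      rw [Finset.sum_congr rfl hc, Finset.sum_add_distrib, Finset.sum_const,
        Finset.card_range, Finset.mul_sum]
      push_cast; ring
    rw [h1]; linear_combination h0
  have choose_two_cast : ∀ k : ℕ, ((2 * Nat.choose k 2 : ℕ) : ℤ) = (k:ℤ)^2 - k := by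
    intro k
    rw [two_mul_choose_two]
    cases k with
    | zero => simp
    | succ m => push_cast [Nat.add_sub_cancel]; ring
  -- compute the LHS of the q-binomial identity
  have h2 : ∏ j ∈ Finset.range (2*N), (1 + w * x ^ ((1:ℤ) - 2*N) * (x^2) ^ j)
      = ∏ j ∈ Finset.range (N+N), (1 + w * x ^ ((2*(j:ℤ)+1) - 2*(N:ℤ))) := by
    rw [← two_mul]
    exact Finset.prod_congr rfl fun j _ => hfac j
  have h3 : ∏ j ∈ Finset.range N, (1 + w * x ^ ((2*((N:ℤ)+(j:ℤ))+1) - 2*(N:ℤ)))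
      = ∏ j ∈ Finset.range N, (1 + w * x ^ (2*j+1)) := by
    refine Finset.prod_congr rfl fun j _ => ?_
    congr 1
    rw [show (2*((N:ℤ)+(j:ℤ))+1) - 2*(N:ℤ) = ((2*j+1 : ℕ) : ℤ) by push_cast; ring,
      zpow_natCast]
  have h4 : ∏ j ∈ Finset.range N, (1 + w * x ^ ((2*(j:ℤ)+1) - 2*(N:ℤ)))
      = (w ^ N * x ^ (-(N:ℤ)^2)) * ∏ j ∈ Finset.range N, (1 + w⁻¹ * x ^ (2*j+1)) := by
    have hsp : ∀ j ∈ Finset.range N, 1 + w * x ^ ((2*(j:ℤ)+1) - 2*(N:ℤ))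
        = (w * x ^ ((2*(j:ℤ)+1) - 2*(N:ℤ)))
          * (1 + w⁻¹ * x ^ (-((2*(j:ℤ)+1) - 2*(N:ℤ)))) := fun j _ => hsplit _
    rw [Finset.prod_congr rfl hsp, Finset.prod_mul_distrib, Finset.prod_mul_distrib,
      Finset.prod_const, Finset.card_range, prod_zpow_eq hx0, hsum]
    congr 1
    have hrefl : ∀ j ∈ Finset.range N, 1 + w⁻¹ * x ^ (-((2*(j:ℤ)+1) - 2*(N:ℤ)))
        = (fun m ↦ 1 + w⁻¹ * x ^ (2*m+1)) (N - 1 - j) := by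
      intro j hj
      have hjN : j < N := Finset.mem_range.1 hj
      simp only
      congr 1
      rw [show -((2*(j:ℤ)+1) - 2*(N:ℤ)) = ((2*(N-1-j)+1 : ℕ) : ℤ) by
        push_cast [Nat.sub_sub]; omega, zpow_natCast]
    rw [Finset.prod_congr rfl hrefl]
    exact Finset.prod_range_reflect (fun m ↦ 1 + w⁻¹ * x ^ (2*m+1)) N
  have hL : (w ^ N * x ^ (-(N:ℤ)^2)) *
      (∏ m ∈ Finset.range N, ((1 + w * x ^ (2*m+1)) * (1 + w⁻¹ * x ^ (2*m+1))))
      = ∑ k ∈ Finset.range (2*N+1),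
          (x^2) ^ (Nat.choose k 2) * gb (x^2) (2*N) k * (w * x ^ ((1:ℤ) - 2*N)) ^ k := by
    rw [← hqb, h2, Finset.prod_range_add]
    simp only [Finset.prod_mul_distrib]
    push_cast
    rw [h3, h4]
    ring
  -- finish: multiply by the inverse factor and massage term-wise
  have hwN : w ^ N ≠ 0 := pow_ne_zero _ hw
  have hxN : x ^ (-(N:ℤ)^2) ≠ 0 := zpow_ne_zero _ hx0
  have hePN : (∏ m ∈ Finset.range N, ((1 + w * x ^ (2*m+1)) * (1 + w⁻¹ * x ^ (2*m+1))))
      = (w ^ N * x ^ (-(N:ℤ)^2))⁻¹ * ∑ k ∈ Finset.range (2*N+1),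
          (x^2) ^ (Nat.choose k 2) * gb (x^2) (2*N) k * (w * x ^ ((1:ℤ) - 2*N)) ^ k := by
    rw [← hL, ← mul_assoc, inv_mul_cancel₀ (mul_ne_zero hwN hxN), one_mul]
  rw [hePN, Finset.mul_sum]
  refine Finset.sum_congr rfl fun k _ => ?_
  -- term-wise identity
  have ex : x ^ (((k:ℤ) - N)^2)
      = x ^ ((N:ℤ)^2) * x ^ (((2 * Nat.choose k 2 : ℕ)) : ℤ) * x ^ (((1:ℤ) - 2*N) * k) := by
    rw [← zpow_add₀ hx0, ← zpow_add₀ hx0]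
    congr 1
    rw [choose_two_cast k]
    ring
  have ew : w ^ ((k:ℤ) - N) = (w ^ ((N:ℤ)))⁻¹ * w ^ ((k:ℤ)) := by
    rw [← zpow_neg, ← zpow_add₀ hw]
    congr 1
    ring
  have e3 : (w * x ^ ((1:ℤ) - 2*N)) ^ k = w ^ ((k:ℤ)) * x ^ (((1:ℤ) - 2*N) * k) := by
    rw [mul_pow, ← zpow_natCast (x ^ ((1:ℤ) - 2*N)) k, ← zpow_mul, ← zpow_natCast w k]
  have e2 : (x^2) ^ (Nat.choose k 2) = x ^ (((2 * Nat.choose k 2 : ℕ)) : ℤ) := by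
    rw [zpow_natCast, ← pow_mul]
  have exn : x ^ (-(N:ℤ)^2) = (x ^ ((N:ℤ)^2))⁻¹ := by rw [← zpow_neg]
  have ewn : w ^ N = w ^ ((N:ℤ)) := (zpow_natCast w N).symm
  rw [ex, ew, e3, e2, exn, ewn]
  have hxb : x ^ ((N:ℤ)^2) ≠ 0 := zpow_ne_zero _ hx0
  have hwb : w ^ ((N:ℤ)) ≠ 0 := zpow_ne_zero _ hw
  field_simp

/-! ### The Jacobi triple product -/

theorem tripleProduct {x w : ℂ} (hx : ‖x‖ < 1) (hx0 : x ≠ 0) (hw : w ≠ 0)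
    (hsum : Summable (fun n : ℤ ↦ x ^ (n ^ 2) * w ^ n)) {T : ℂ}
    (hT : HasProd (fun m : ℕ ↦ (1 + w * x ^ (2*m+1)) * (1 + w⁻¹ * x ^ (2*m+1))) T) :
    ∑' n : ℤ, x ^ (n ^ 2) * w ^ n = (∏' j : ℕ, (1 - x ^ (2*j+2))) * T := by
  have hq : ‖x ^ 2‖ < 1 := by
    rw [norm_pow]; exact pow_lt_one₀ (norm_nonneg x) hx (by norm_num)
  set Q : ℂ := ∏' j : ℕ, (1 - x ^ (2*j+2)) with hQdef
  have hfun : (fun j : ℕ ↦ 1 + (-1) * x ^ (2*j+2)) = (fun j : ℕ ↦ 1 - x ^ (2*j+2)) := by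
    funext j; ring
  have hgeom := hasProd_geom hx (a := -1) (by norm_num) 2 (by norm_num)
  rw [hfun] at hgeom
  have hQ : HasProd (fun j : ℕ ↦ 1 - x ^ (2*j+2)) Q := hgeom.1
  have hQ0 : Q ≠ 0 := hgeom.2
  have hAA : ∀ M : ℕ, AA (x^2) M = ∏ i ∈ Finset.range M, (1 - x ^ (2*i+2)) := by
    intro M
    refine Finset.prod_congr rfl fun i _ => ?_
    rw [← pow_mul]
    ring_nf
  have hAtend : Tendsto (fun M ↦ AA (x^2) M) atTop (nhds Q) := by
    refine hQ.tendsto_prod_nat.congr fun M => (hAA M).symm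
  have hAne : ∀ M, AA (x^2) M ≠ 0 := fun M ↦ AA_ne hq M
  -- uniform lower bound for the partial products
  obtain ⟨ε, hε, hlow⟩ : ∃ ε : ℝ, 0 < ε ∧ ∀ M, ε ≤ ‖AA (x^2) M‖ := by
    have hnt : Tendsto (fun M ↦ ‖AA (x^2) M‖) atTop (nhds ‖Q‖) := hAtend.norm
    have hev : ∀ᶠ M in atTop, ‖Q‖/2 ≤ ‖AA (x^2) M‖ := by
      apply hnt.eventually_const_le
      have : 0 < ‖Q‖ := norm_pos_iff.2 hQ0
      linarith
    obtain ⟨M₀, hM₀⟩ := Filter.eventually_atTop.mp hev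
    have hne : (((Finset.range (M₀+1)).image (fun i ↦ ‖AA (x^2) i‖))).Nonempty := by
      simp
    set m := ((Finset.range (M₀+1)).image (fun i ↦ ‖AA (x^2) i‖)).min' hne with hm
    refine ⟨min (‖Q‖/2) m, ?_, ?_⟩
    · apply lt_min
      · have : 0 < ‖Q‖ := norm_pos_iff.2 hQ0
        linarith
      · obtain ⟨i, hi, him⟩ := Finset.mem_image.1 (Finset.min'_mem _ hne)
        rw [hm, ← him]
        exact norm_pos_iff.2 (hAne i)
    · intro M
      rcases le_or_gt M M₀ with h | h
      · refine le_trans (min_le_right _ _) ?_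
        exact Finset.min'_le _ _ (Finset.mem_image_of_mem _ (Finset.mem_range.2 (by omega)))
      · exact le_trans (min_le_left _ _) (hM₀ M (by omega))
  -- uniform upper bound
  have hsr : Summable (fun i : ℕ ↦ ‖x‖ ^ (2*i+2)) := by
    have h2 : ‖x‖^2 < 1 := pow_lt_one₀ (norm_nonneg x) hx (by norm_num)
    have := (summable_geometric_of_lt_one (by positivity) h2).mul_left (‖x‖^2)
    refine this.congr fun i ↦ ?_
    rw [← pow_mul]; ring
  set U : ℝ := Real.exp (∑' i : ℕ, ‖x‖ ^ (2*i+2)) with hUdef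
  have hup : ∀ M, ‖AA (x^2) M‖ ≤ U := by
    intro M
    rw [hAA M]
    calc ‖∏ i ∈ Finset.range M, (1 - x ^ (2*i+2))‖
        = ∏ i ∈ Finset.range M, ‖1 - x ^ (2*i+2)‖ := norm_prod _ _
      _ ≤ ∏ i ∈ Finset.range M, Real.exp (‖x‖ ^ (2*i+2)) := by
          apply Finset.prod_le_prod (fun i _ ↦ norm_nonneg _)
          intro i _
          calc ‖1 - x ^ (2*i+2)‖ ≤ ‖(1:ℂ)‖ + ‖x ^ (2*i+2)‖ := norm_sub_le _ _
            _ = 1 + ‖x‖^(2*i+2) := by rw [norm_one, norm_pow]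
            _ ≤ Real.exp (‖x‖^(2*i+2)) := by
                have := Real.add_one_le_exp (‖x‖^(2*i+2)); linarith
      _ = Real.exp (∑ i ∈ Finset.range M, ‖x‖ ^ (2*i+2)) := (Real.exp_sum _ _).symm
      _ ≤ U := by
          apply Real.exp_le_exp.2
          exact Summable.sum_le_tsum _ (fun i _ ↦ by positivity) hsr
  -- the Gaussian binomial as a ratio
  have gb_div : ∀ M k : ℕ, k ≤ M →
      gb (x^2) M k = AA (x^2) M / (AA (x^2) k * AA (x^2) (M - k)) := by
    intro M k hk
    have hre : ∏ j ∈ Finset.range k, (1 - (x^2) ^ ((M - k) + j + 1))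
        = ∏ i ∈ Finset.range k, (1 - (x^2) ^ (M - i)) := by
      have hc : ∀ j ∈ Finset.range k, (1 - (x^2) ^ ((M-k)+j+1))
          = (fun i ↦ 1 - (x^2) ^ (M - i)) (k-1-j) := by
        intro j hj
        have hjk := Finset.mem_range.1 hj
        show 1 - (x^2) ^ ((M-k)+j+1) = 1 - (x^2) ^ (M - (k-1-j))
        rw [show (M-k)+j+1 = M - (k-1-j) by omega]
      rw [Finset.prod_congr rfl hc]
      exact Finset.prod_range_reflect (fun i ↦ 1 - (x^2) ^ (M - i)) k
    have hnum : (∏ i ∈ Finset.range k, (1 - (x^2) ^ (M - i))) * AA (x^2) (M - k)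
        = AA (x^2) M := by
      rw [← hre]
      conv_rhs => rw [AA, show M = M - k + k by omega]
      rw [Finset.prod_range_add, mul_comm]
      congr 1
    rw [gb]
    rw [show (∏ i ∈ Finset.range k, (1 - (x^2) ^ (M - i)))
        = AA (x^2) M / AA (x^2) (M - k) from by
      rw [eq_div_iff (hAne _)]; exact hnum]
    rw [div_div, mul_comm]
  have gb_bound : ∀ M k : ℕ, k ≤ M → ‖gb (x^2) M k‖ ≤ U / (ε * ε) := by
    intro M k hk
    rw [gb_div M k hk, norm_div, norm_mul]
    apply div_le_div₀ (by positivity) (hup M) (by positivity)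
    exact mul_le_mul (hlow k) (hlow (M-k)) (le_of_lt hε) (norm_nonneg _)
  set C : ℝ := U / (ε * ε) with hC
  have hC0 : 0 ≤ C := by positivity
  set F : ℕ → ℤ → ℂ := fun N n ↦
    (if n.natAbs ≤ N then gb (x^2) (2*N) (n + (N:ℤ)).toNat else 0) * (x ^ (n ^ 2) * w ^ n)
    with hF
  set g : ℤ → ℂ := fun n ↦ Q⁻¹ * (x ^ (n ^ 2) * w ^ n) with hg
  have hab : ∀ n : ℤ, Tendsto (fun N ↦ F N n) atTop (nhds (g n)) := by
    intro n
    have hev : ∀ᶠ N in atTop, F N n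
        = AA (x^2) (2*N) / (AA (x^2) ((n + (N:ℤ)).toNat) * AA (x^2) (((N:ℤ) - n).toNat))
          * (x ^ (n ^ 2) * w ^ n) := by
      filter_upwards [eventually_ge_atTop n.natAbs] with N hN
      have h1 : n.natAbs ≤ N := hN
      have hk : (n + (N:ℤ)).toNat ≤ 2*N := by omega
      have h2 : 2*N - (n + (N:ℤ)).toNat = ((N:ℤ) - n).toNat := by omega
      simp only [hF, if_pos h1]
      rw [gb_div _ _ hk, h2]
    have ht1 : Tendsto (fun N : ℕ ↦ AA (x^2) (2*N)) atTop (nhds Q) :=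
      hAtend.comp (tendsto_atTop_mono (fun N ↦ by simp only [id_eq]; omega) tendsto_id)
    have ht2 : Tendsto (fun N : ℕ ↦ AA (x^2) ((n + (N:ℤ)).toNat)) atTop (nhds Q) :=
      hAtend.comp (tendsto_atTop_mono
        (fun N ↦ (by omega : N - n.natAbs ≤ (n + (N:ℤ)).toNat))
        (tendsto_sub_atTop_nat _))
    have ht3 : Tendsto (fun N : ℕ ↦ AA (x^2) (((N:ℤ) - n).toNat)) atTop (nhds Q) :=
      hAtend.comp (tendsto_atTop_mono
        (fun N ↦ (by omega : N - n.natAbs ≤ ((N:ℤ) - n).toNat))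
        (tendsto_sub_atTop_nat _))
    have hten := (ht1.div (ht2.mul ht3) (mul_ne_zero hQ0 hQ0)).mul_const (x ^ (n^2) * w ^ n)
    have hval : Q / (Q * Q) * (x ^ (n^2) * w ^ n) = g n := by
      rw [hg, div_mul_cancel_left₀ hQ0]
    rw [hval] at hten
    exact hten.congr' (Filter.EventuallyEq.symm hev)
  have hbound : ∀ N : ℕ, ∀ n : ℤ, ‖F N n‖ ≤ C * ‖x ^ (n^2) * w ^ n‖ := by
    intro N n
    simp only [hF, norm_mul]
    apply mul_le_mul_of_nonneg_right _ (by positivity)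
    split_ifs with h
    · exact gb_bound _ _ (by omega)
    · simpa using hC0
  have hbs : Summable (fun n : ℤ ↦ C * ‖x ^ (n^2) * w ^ n‖) := (hsum.norm).mul_left C
  have htan := tendsto_tsum_of_dominated_convergence hbs hab
    (Filter.Eventually.of_forall (fun N => hbound N))
  have hfin : ∀ N : ℕ, ∑' n : ℤ, F N n
      = ∏ m ∈ Finset.range N, ((1 + w * x ^ (2*m+1)) * (1 + w⁻¹ * x ^ (2*m+1))) := by
    intro N
    have h0 : ∀ n ∉ Finset.Icc (-(N:ℤ)) N, F N n = 0 := by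
      intro n hn
      simp only [Finset.mem_Icc] at hn
      simp only [hF, if_neg (by omega : ¬ n.natAbs ≤ N), zero_mul]
    rw [bilateral hx hx0 hw N, tsum_eq_sum h0]
    refine Finset.sum_nbij' (i := fun n ↦ (n + (N:ℤ)).toNat) (j := fun k ↦ (k:ℤ) - N)
      ?_ ?_ ?_ ?_ ?_
    · intro a ha; simp only [Finset.mem_Icc] at ha; simp only [Finset.mem_range]; omega
    · intro k hk; simp only [Finset.mem_range] at hk; simp only [Finset.mem_Icc]; omega
    · intro a ha; simp only [Finset.mem_Icc] at ha
      show ((a + (N:ℤ)).toNat : ℤ) - N = a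
      omega
    · intro k hk; simp only [Finset.mem_range] at hk
      show (((k:ℤ) - N) + N).toNat = k
      omega
    · intro a ha
      simp only [Finset.mem_Icc] at ha
      simp only [hF, if_pos (by omega : a.natAbs ≤ N)]
      rw [show (((a + (N:ℤ)).toNat : ℤ)) - N = a by omega]
      ring
  have hPW : Tendsto (fun N ↦ ∑' n : ℤ, F N n) atTop (nhds T) :=
    hT.tendsto_prod_nat.congr fun N => (hfin N).symm
  have huniq : T = ∑' n : ℤ, g n := tendsto_nhds_unique hPW htan
  rw [hg, tsum_mul_left] at huniq
  rw [huniq, ← mul_assoc, mul_inv_cancel₀ hQ0, one_mul]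

lemma qh_norm_lt {τ : ℂ} (hτ : 0 < τ.im) : ‖qh τ‖ < 1 := by
  rw [qh, Complex.norm_exp]
  rw [Real.exp_lt_one_iff]
  have : (↑π * I * τ).re = -(π * τ.im) := by
    simp [Complex.mul_re, Complex.mul_im]
  rw [this]
  have := Real.pi_pos
  nlinarith

lemma qh_ne {τ : ℂ} : qh τ ≠ 0 := Complex.exp_ne_zero _

lemma qq_eq_qh_sq (τ : ℂ) : qq τ = qh τ ^ 2 := by
  rw [qq, qh, sq, ← Complex.exp_add]
  congr 1
  ring

lemma qq_pow (τ : ℂ) (j : ℕ) : qq τ ^ (j + 1) = qh τ ^ (2 * j + 2) := by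
  rw [qq_eq_qh_sq, ← pow_mul, show 2*(j+1) = 2*j+2 by ring]

lemma theta_master (z : ℂ) {τ : ℂ} (hτ : 0 < τ.im) {T : ℂ}
    (hT : HasProd (fun m : ℕ ↦ (1 + cexp (2*↑π*I*z) * qh τ ^ (2*m+1))
      * (1 + (cexp (2*↑π*I*z))⁻¹ * qh τ ^ (2*m+1))) T) :
    jacobiTheta₂ z τ = (∏' j : ℕ, (1 - qh τ ^ (2*j+2))) * T := by
  have hx : ‖qh τ‖ < 1 := qh_norm_lt hτ
  have hw : cexp (2*↑π*I*z) ≠ 0 := Complex.exp_ne_zero _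
  have hterm : ∀ n : ℤ, jacobiTheta₂_term n z τ = qh τ ^ (n^2) * cexp (2*↑π*I*z) ^ n := by
    intro n
    simp only [jacobiTheta₂_term, qh]
    rw [← Complex.exp_int_mul, ← Complex.exp_int_mul, ← Complex.exp_add]
    congr 1
    push_cast
    ring
  have hsum : Summable (fun n : ℤ ↦ qh τ ^ (n^2) * cexp (2*↑π*I*z) ^ n) :=
    (((summable_jacobiTheta₂_term_iff z τ).2 hτ)).congr hterm
  rw [jacobiTheta₂, tsum_congr hterm]
  exact tripleProduct hx qh_ne hw hsum hT

section inst
variable {τ : ℂ} (hτ : 0 < τ.im)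
include hτ

lemma theta3_eq : jacobiTheta₂ 0 τ = theta3 τ := by
  have hx : ‖qh τ‖ < 1 := qh_norm_lt hτ
  obtain ⟨hP, -⟩ := hasProd_geom hx (a := 1) (by norm_num) 1 (by norm_num)
  set P := ∏' j : ℕ, (1 + (1:ℂ) * qh τ ^ (2*j+1)) with hPdef
  obtain ⟨hQ, -⟩ := hasProd_geom hx (a := -1) (by norm_num) 2 (by norm_num)
  set Q := ∏' j : ℕ, (1 + (-1:ℂ) * qh τ ^ (2*j+2)) with hQdef
  have h3 : theta3 τ = Q * (P * P) := by
    rw [theta3, show (fun j : ℕ ↦ (1 - qq τ ^ (j+1)) * (1 + qh τ ^ (2*j+1))^2)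
      = fun j ↦ ((1 + (-1) * qh τ ^ (2*j+2)) * ((1 + 1 * qh τ ^ (2*j+1))
        * (1 + 1 * qh τ ^ (2*j+1)))) from funext fun j => by rw [qq_pow]; ring]
    exact (hQ.mul (hP.mul hP)).tprod_eq
  have hone : cexp (2*↑π*I*(0:ℂ)) = 1 := by rw [mul_zero, Complex.exp_zero]
  have hT : HasProd (fun m : ℕ ↦ (1 + cexp (2*↑π*I*(0:ℂ)) * qh τ ^ (2*m+1))
      * (1 + (cexp (2*↑π*I*(0:ℂ)))⁻¹ * qh τ ^ (2*m+1))) (P * P) := by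
    rw [show (fun m : ℕ ↦ (1 + cexp (2*↑π*I*(0:ℂ)) * qh τ ^ (2*m+1))
      * (1 + (cexp (2*↑π*I*(0:ℂ)))⁻¹ * qh τ ^ (2*m+1)))
      = fun m ↦ ((1 + 1 * qh τ ^ (2*m+1)) * (1 + 1 * qh τ ^ (2*m+1))) from
      funext fun m => by rw [hone, inv_one]]
    exact hP.mul hP
  rw [theta_master 0 hτ hT, h3,
    show (fun j : ℕ ↦ 1 - qh τ ^ (2*j+2)) = (fun j : ℕ ↦ 1 + (-1) * qh τ ^ (2*j+2)) from
      funext fun j => by ring]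

lemma theta2_eq : jacobiTheta₂ (1/2 : ℂ) τ = theta2 τ := by
  have hx : ‖qh τ‖ < 1 := qh_norm_lt hτ
  obtain ⟨hP, -⟩ := hasProd_geom hx (a := -1) (by norm_num) 1 (by norm_num)
  set P := ∏' j : ℕ, (1 + (-1:ℂ) * qh τ ^ (2*j+1)) with hPdef
  obtain ⟨hQ, -⟩ := hasProd_geom hx (a := -1) (by norm_num) 2 (by norm_num)
  set Q := ∏' j : ℕ, (1 + (-1:ℂ) * qh τ ^ (2*j+2)) with hQdef
  have h2 : theta2 τ = Q * (P * P) := by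
    rw [theta2, show (fun j : ℕ ↦ (1 - qq τ ^ (j+1)) * (1 - qh τ ^ (2*j+1))^2)
      = fun j ↦ ((1 + (-1) * qh τ ^ (2*j+2)) * ((1 + (-1) * qh τ ^ (2*j+1))
        * (1 + (-1) * qh τ ^ (2*j+1)))) from funext fun j => by rw [qq_pow]; ring]
    exact (hQ.mul (hP.mul hP)).tprod_eq
  have hone : cexp (2*↑π*I*(1/2 : ℂ)) = -1 := by
    rw [show 2*↑π*I*(1/2 : ℂ) = ↑π*I by ring, Complex.exp_pi_mul_I]
  have hT : HasProd (fun m : ℕ ↦ (1 + cexp (2*↑π*I*(1/2:ℂ)) * qh τ ^ (2*m+1))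
      * (1 + (cexp (2*↑π*I*(1/2:ℂ)))⁻¹ * qh τ ^ (2*m+1))) (P * P) := by
    rw [show (fun m : ℕ ↦ (1 + cexp (2*↑π*I*(1/2:ℂ)) * qh τ ^ (2*m+1))
      * (1 + (cexp (2*↑π*I*(1/2:ℂ)))⁻¹ * qh τ ^ (2*m+1)))
      = fun m ↦ ((1 + (-1) * qh τ ^ (2*m+1)) * (1 + (-1) * qh τ ^ (2*m+1))) from
      funext fun m => by rw [hone]; norm_num]
    exact hP.mul hP
  rw [theta_master (1/2 : ℂ) hτ hT, h2,
    show (fun j : ℕ ↦ 1 - qh τ ^ (2*j+2)) = (fun j : ℕ ↦ 1 + (-1) * qh τ ^ (2*j+2)) from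
      funext fun j => by ring]

lemma theta1_eq : theta1 τ = cexp (↑π*I*τ/4) * jacobiTheta₂ (τ/2) τ := by
  have hx : ‖qh τ‖ < 1 := qh_norm_lt hτ
  obtain ⟨hE, -⟩ := hasProd_geom hx (a := 1) (by norm_num) 2 (by norm_num)
  set E := ∏' j : ℕ, (1 + (1:ℂ) * qh τ ^ (2*j+2)) with hEdef
  obtain ⟨hQ, -⟩ := hasProd_geom hx (a := -1) (by norm_num) 2 (by norm_num)
  set Q := ∏' j : ℕ, (1 + (-1:ℂ) * qh τ ^ (2*j+2)) with hQdef
  -- the shifted product ∏ (1 + x^{2j}) = 2 * E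
  have hshift : HasProd (fun j : ℕ ↦ 1 + qh τ ^ (2*j)) (2 * E) := by
    have hE' : HasProd (fun j : ℕ ↦ 1 + qh τ ^ (2*(j+1))) E := by
      rw [show (fun j : ℕ ↦ 1 + qh τ ^ (2*(j+1))) = (fun j : ℕ ↦ 1 + (1:ℂ) * qh τ ^ (2*j+2))
        from funext fun j => by rw [one_mul, show 2*(j+1) = 2*j+2 by ring]]
      exact hE
    have h := HasProd.zero_mul (f := fun j : ℕ ↦ 1 + qh τ ^ (2*j)) hE'
    convert h using 1
    norm_num
  have hwx : cexp (2*↑π*I*(τ/2)) = qh τ := by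
    rw [qh]; congr 1; ring
  have hT : HasProd (fun m : ℕ ↦ (1 + cexp (2*↑π*I*(τ/2)) * qh τ ^ (2*m+1))
      * (1 + (cexp (2*↑π*I*(τ/2)))⁻¹ * qh τ ^ (2*m+1))) (E * (2 * E)) := by
    rw [show (fun m : ℕ ↦ (1 + cexp (2*↑π*I*(τ/2)) * qh τ ^ (2*m+1))
      * (1 + (cexp (2*↑π*I*(τ/2)))⁻¹ * qh τ ^ (2*m+1)))
      = fun m ↦ ((1 + (1:ℂ) * qh τ ^ (2*m+2)) * (1 + qh τ ^ (2*m))) from ?_]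
    · exact hE.mul hshift
    · funext m
      have e1 : qh τ * qh τ ^ (2*m+1) = qh τ ^ (2*m+2) := by ring
      have e2 : (qh τ)⁻¹ * qh τ ^ (2*m+1) = qh τ ^ (2*m) := by
        rw [inv_mul_eq_iff_eq_mul₀ qh_ne]; ring
      rw [hwx, e1, e2, one_mul]
  have hmaster := theta_master (τ/2) hτ hT
  have h1 : theta1 τ = 2 * cexp (↑π*I*τ/4) * (Q * (E * E)) := by
    rw [theta1, show (fun j : ℕ ↦ (1 - qq τ ^ (j+1)) * (1 + qq τ ^ (j+1))^2)
      = fun j ↦ ((1 + (-1) * qh τ ^ (2*j+2)) * ((1 + (1:ℂ) * qh τ ^ (2*j+2))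
        * (1 + (1:ℂ) * qh τ ^ (2*j+2)))) from funext fun j => by rw [qq_pow]; ring]
    rw [(hQ.mul (hE.mul hE)).tprod_eq]
  rw [hmaster, h1,
    show (fun j : ℕ ↦ 1 - qh τ ^ (2*j+2)) = (fun j : ℕ ↦ 1 + (-1) * qh τ ^ (2*j+2)) from
      funext fun j => by ring]
  ring

end inst

/-- For every `τ` in the upper half-plane, `δ₂(-1/τ) = τ² δ₁(τ)`. -/
theorem delta2_neg_inv (τ : ℂ) (hτ : 0 < τ.im) :
    delta2 (-1 / τ) = τ ^ 2 * delta1 τ := by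
  have hτ0 : τ ≠ 0 := by intro h; rw [h] at hτ; simp at hτ
  have him : 0 < (-1/τ).im := by
    rw [show (-1/τ : ℂ) = -τ⁻¹ by ring]
    have h' : (-τ⁻¹).im = τ.im / Complex.normSq τ := by
      rw [Complex.neg_im, Complex.inv_im]; ring
    rw [h']
    exact div_pos hτ (Complex.normSq_pos.2 hτ0)
  have hfe3 := jacobiTheta₂_functional_equation 0 τ
  have hfe := jacobiTheta₂_functional_equation (-1/2 : ℂ) τ
  set s : ℂ := (-I*τ) ^ ((1:ℂ)/2) with hs
  have hbase : -I*τ ≠ 0 := mul_ne_zero (neg_ne_zero.2 I_ne_zero) hτ0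
  have hs2 : s^2 = -I*τ := by
    rw [hs, sq, ← Complex.cpow_add _ _ hbase]
    norm_num
  have hs0 : s ≠ 0 := by
    intro h
    rw [h] at hs2
    simp only [ne_eq] at hbase
    exact hbase (by rw [← hs2]; ring)
  have hs4 : s^4 = -τ^2 := by
    rw [show (4:ℕ) = 2*2 from rfl, pow_mul, hs2,
      show (-I*τ)^2 = (I^2)*τ^2 by ring, Complex.I_sq]
    ring
  -- θ₃ transformation
  have h3 : theta3 (-1/τ) = s * theta3 τ := by
    have hthis : jacobiTheta₂ 0 τ = 1/s * jacobiTheta₂ 0 (-1/τ) := by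
      rw [hfe3]
      norm_num
    rw [theta3_eq hτ, theta3_eq him] at hthis
    rw [hthis]
    field_simp
  -- θ₁ transformation
  have hneg : jacobiTheta₂ (-1/2 : ℂ) τ = jacobiTheta₂ (1/2 : ℂ) τ := by
    rw [show (-1/2 : ℂ) = -(1/2) by ring, jacobiTheta₂_neg_left]
  have h1 : theta1 (-1/τ) = s * theta2 τ := by
    rw [theta1_eq him, show ((-1/τ)/2 : ℂ) = (-1/2)/τ by ring]
    have hexp0 : cexp (-↑π*I*(-1/2:ℂ)^2/τ) ≠ 0 := Complex.exp_ne_zero _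
    have hsolve : jacobiTheta₂ ((-1/2 : ℂ)/τ) (-1/τ)
        = s * (cexp (-↑π*I*(-1/2:ℂ)^2/τ))⁻¹ * jacobiTheta₂ (-1/2 : ℂ) τ := by
      rw [hfe]
      field_simp
    rw [hsolve, hneg, theta2_eq hτ]
    have hcanc : cexp (↑π*I*(-1/τ)/4) * (cexp (-↑π*I*(-1/2:ℂ)^2/τ))⁻¹ = 1 := by
      rw [← Complex.exp_neg, ← Complex.exp_add,
        show ↑π*I*(-1/τ)/4 + -(-↑π*I*(-1/2:ℂ)^2/τ) = 0 by field_simp; ring]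
      exact Complex.exp_zero
    linear_combination s * theta2 τ * hcanc
  rw [delta2, delta1, h1, h3]
  linear_combination (-(theta2 τ^4 + theta3 τ^4)/8) * hs4
end

section
/- The expansion of ε2 in the variable q^{1/2} = e^{πiτ} begins ε2(τ) = q^{1/2} + 8q + 28q^{3/2} + ⋯; precisely, ε2 is a holomorphic function of t = q^{1/2} on the punctured unit disc extending holomorphically to t = 0, and its Taylor coefficients at t = 0 in degrees 0, 1, 2, 3 are 0, 1, 8 and 28 respectively. -/
open Complex Real

/-- `ε₂(τ) = θ₁(0,τ)⁴ θ₃(0,τ)⁴/16`. -/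
noncomputable def epsilon2 (τ : ℂ) : ℂ := theta1 τ ^ 4 * theta3 τ ^ 4 / 16


open Filter Metric Topology

namespace Eps2Aux

noncomputable def f1 (j : ℕ) (t : ℂ) : ℂ :=
  (1 - (t ^ 2) ^ (j + 1)) * (1 + (t ^ 2) ^ (j + 1)) ^ 2

noncomputable def f2 (j : ℕ) (t : ℂ) : ℂ :=
  (1 - (t ^ 2) ^ (j + 1)) * (1 + t ^ (2 * j + 1)) ^ 2

lemma f1_diff (j : ℕ) : Differentiable ℂ (f1 j) := by unfold f1; fun_prop

lemma f2_diff (j : ℕ) : Differentiable ℂ (f2 j) := by unfold f2; fun_prop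

lemma f1_bound (j : ℕ) (t : ℂ) (ht : ‖t‖ ≤ 1) :
    ‖f1 j t - 1‖ ≤ 3 * ‖t‖ ^ (2 * j + 2) := by
  have h : f1 j t - 1 = (t ^ 2) ^ (j+1) - ((t ^ 2) ^ (j+1)) ^ 2 - ((t ^ 2) ^ (j+1)) ^ 3 := by
    unfold f1; ring
  set x : ℝ := ‖t‖ ^ (2 * j + 2) with hxdef
  have hx : ‖(t ^ 2) ^ (j+1)‖ = x := by
    rw [norm_pow, norm_pow, ← pow_mul, hxdef]; ring
  have hx0 : 0 ≤ x := by positivity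
  have hx1 : x ≤ 1 := pow_le_one₀ (norm_nonneg t) ht
  calc ‖f1 j t - 1‖ ≤ ‖(t ^ 2) ^ (j+1)‖ + ‖((t ^ 2) ^ (j+1)) ^ 2‖ + ‖((t ^ 2) ^ (j+1)) ^ 3‖ := by
        rw [h]; exact (norm_sub_le _ _).trans (by gcongr; exact norm_sub_le _ _)
    _ = x + x ^ 2 + x ^ 3 := by simp only [norm_pow]; rw [hxdef]; ring
    _ ≤ 3 * x := by nlinarith

lemma f2_bound (j : ℕ) (t : ℂ) (ht : ‖t‖ ≤ 1) :
    ‖f2 j t - 1‖ ≤ 7 * ‖t‖ ^ (2 * j + 1) := by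
  have h : f2 j t - 1 =
      2 * t ^ (2*j+1) + (t ^ (2*j+1)) ^ 2 - (t ^ 2) ^ (j+1) - 2 * ((t ^ 2) ^ (j+1) * t ^ (2*j+1))
        - (t ^ 2) ^ (j+1) * (t ^ (2*j+1)) ^ 2 := by
    unfold f2; ring
  set b : ℝ := ‖t‖ ^ (2 * j + 1) with hbdef
  have hb0 : 0 ≤ b := by positivity
  have hb1 : b ≤ 1 := pow_le_one₀ (norm_nonneg t) ht
  have ha : ‖(t ^ 2) ^ (j+1)‖ = ‖t‖ ^ (2*j+2) := by
    rw [norm_pow, norm_pow, ← pow_mul]; ring_nf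
  have hab : ‖t‖ ^ (2*j+2) ≤ b := by
    rw [hbdef]
    calc ‖t‖ ^ (2*j+2) = ‖t‖ ^ (2*j+1) * ‖t‖ := by ring
      _ ≤ ‖t‖ ^ (2*j+1) * 1 := by gcongr
      _ = ‖t‖ ^ (2*j+1) := by ring
  have hnb : ‖t ^ (2*j+1)‖ = b := by rw [norm_pow]
  calc ‖f2 j t - 1‖ ≤ ‖2 * t ^ (2*j+1)‖ + ‖(t ^ (2*j+1)) ^ 2‖ + ‖(t ^ 2) ^ (j+1)‖
        + ‖2 * ((t ^ 2) ^ (j+1) * t ^ (2*j+1))‖ + ‖(t ^ 2) ^ (j+1) * (t ^ (2*j+1)) ^ 2‖ := by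
        rw [h]
        refine (norm_sub_le _ _).trans ?_
        gcongr
        refine (norm_sub_le _ _).trans ?_
        gcongr
        refine (norm_sub_le _ _).trans ?_
        gcongr
        exact norm_add_le _ _
    _ = 2 * b + b ^ 2 + ‖t‖ ^ (2*j+2) + 2 * (‖t‖ ^ (2*j+2) * b) + ‖t‖ ^ (2*j+2) * b ^ 2 := by
        simp only [norm_mul, norm_pow, hbdef]
        norm_num
        ring
    _ ≤ 7 * b := by nlinarith [pow_le_one₀ (norm_nonneg t) ht (n := 2*j+2), hab, sq_nonneg b]

lemma f1_bound' (j : ℕ) (t : ℂ) (ht : ‖t‖ < 1) : ‖f1 j t - 1‖ ≤ 7 * ‖t‖ ^ (j + 1) := by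
  refine (f1_bound j t ht.le).trans ?_
  have := pow_le_pow_of_le_one (norm_nonneg t) ht.le (show j + 1 ≤ 2*j+2 by omega)
  nlinarith [pow_nonneg (norm_nonneg t) (2*j+2)]

lemma f2_bound' (j : ℕ) (t : ℂ) (ht : ‖t‖ < 1) : ‖f2 j t - 1‖ ≤ 7 * ‖t‖ ^ (j + 1) := by
  refine (f2_bound j t ht.le).trans ?_
  have := pow_le_pow_of_le_one (norm_nonneg t) ht.le (show j + 1 ≤ 2*j+1 by omega)
  nlinarith


section Machinery

variable {f : ℕ → ℂ → ℂ}

/-- Tail factor bounds. -/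
lemma tail_bound (hb : ∀ j (t : ℂ), ‖t‖ < 1 → ‖f j t - 1‖ ≤ 7 * ‖t‖ ^ (j + 1))
    {r : ℝ} (hr1 : r < 1) {N : ℕ} (hN : 7 * r ^ (N + 1) ≤ 1 / 2)
    {t : ℂ} (ht : ‖t‖ ≤ r) (j : ℕ) :
    ‖f (j + N) t - 1‖ ≤ 7 * r ^ (N + 1) * r ^ j ∧ ‖f (j + N) t - 1‖ ≤ 1 / 2 := by
  have hr0 : 0 ≤ r := (norm_nonneg t).trans ht
  have h1 : ‖f (j + N) t - 1‖ ≤ 7 * ‖t‖ ^ (j + N + 1) := hb _ t (lt_of_le_of_lt ht hr1)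
  have h2 : ‖t‖ ^ (j + N + 1) ≤ r ^ (j + N + 1) := pow_le_pow_left₀ (norm_nonneg t) ht _
  have h3 : (7:ℝ) * r ^ (j + N + 1) = 7 * r ^ (N + 1) * r ^ j := by ring
  have h4 : ‖f (j + N) t - 1‖ ≤ 7 * r ^ (N + 1) * r ^ j := by
    rw [← h3]
    linarith
  refine ⟨h4, h4.trans ?_⟩
  calc 7 * r ^ (N + 1) * r ^ j ≤ 7 * r ^ (N + 1) * 1 :=
        mul_le_mul_of_nonneg_left (pow_le_one₀ hr0 hr1.le) (by positivity)
    _ ≤ 1 / 2 := by rw [mul_one]; exact hN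

lemma tail_ne_zero (hb : ∀ j (t : ℂ), ‖t‖ < 1 → ‖f j t - 1‖ ≤ 7 * ‖t‖ ^ (j + 1))
    {r : ℝ} (hr1 : r < 1) {N : ℕ} (hN : 7 * r ^ (N + 1) ≤ 1 / 2)
    {t : ℂ} (ht : ‖t‖ ≤ r) (j : ℕ) : f (j + N) t ≠ 0 := by
  intro h
  have := (tail_bound hb hr1 hN ht j).2
  rw [h] at this
  norm_num at this

lemma tail_log_bound (hb : ∀ j (t : ℂ), ‖t‖ < 1 → ‖f j t - 1‖ ≤ 7 * ‖t‖ ^ (j + 1))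
    {r : ℝ} (hr1 : r < 1) {N : ℕ} (hN : 7 * r ^ (N + 1) ≤ 1 / 2)
    {t : ℂ} (ht : ‖t‖ ≤ r) (j : ℕ) :
    ‖Complex.log (f (j + N) t)‖ ≤ 3 / 2 * (7 * r ^ (N + 1)) * r ^ j := by
  have h := tail_bound hb hr1 hN ht j
  have key : ‖Complex.log (1 + (f (j + N) t - 1))‖ ≤ 3 / 2 * ‖f (j + N) t - 1‖ :=
    Complex.norm_log_one_add_half_le_self h.2
  rw [add_sub_cancel] at key
  calc ‖Complex.log (f (j + N) t)‖ ≤ 3 / 2 * ‖f (j + N) t - 1‖ := key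
    _ ≤ 3 / 2 * (7 * r ^ (N + 1) * r ^ j) := by gcongr; exact h.1
    _ = 3 / 2 * (7 * r ^ (N + 1)) * r ^ j := by ring

lemma tail_log_summable (hb : ∀ j (t : ℂ), ‖t‖ < 1 → ‖f j t - 1‖ ≤ 7 * ‖t‖ ^ (j + 1))
    {r : ℝ} (hr1 : r < 1) {N : ℕ} (hN : 7 * r ^ (N + 1) ≤ 1 / 2)
    {t : ℂ} (ht : ‖t‖ ≤ r) :
    Summable fun j => Complex.log (f (j + N) t) := by
  have hr0 : 0 ≤ r := (norm_nonneg t).trans ht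
  refine Summable.of_norm_bounded ?_ (tail_log_bound hb hr1 hN ht)
  exact (summable_geometric_of_lt_one hr0 hr1).mul_left _

/-- Representation of the tail of the product as an exponential. -/
lemma tail_prod_eq (hb : ∀ j (t : ℂ), ‖t‖ < 1 → ‖f j t - 1‖ ≤ 7 * ‖t‖ ^ (j + 1))
    {r : ℝ} (hr1 : r < 1) {N : ℕ} (hN : 7 * r ^ (N + 1) ≤ 1 / 2)
    {t : ℂ} (ht : ‖t‖ ≤ r) :
    (∏' j : ℕ, f (j + N) t) = Complex.exp (∑' j : ℕ, Complex.log (f (j + N) t)) := by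
  exact (Complex.cexp_tsum_eq_tprod (tail_ne_zero hb hr1 hN ht)
      (tail_log_summable hb hr1 hN ht)).symm

lemma tail_multipliable (hb : ∀ j (t : ℂ), ‖t‖ < 1 → ‖f j t - 1‖ ≤ 7 * ‖t‖ ^ (j + 1))
    {r : ℝ} (hr1 : r < 1) {N : ℕ} (hN : 7 * r ^ (N + 1) ≤ 1 / 2)
    {t : ℂ} (ht : ‖t‖ ≤ r) :
    Multipliable fun j => f (j + N) t :=
  Complex.multipliable_of_summable_log (tail_log_summable hb hr1 hN ht)

lemma multipliable_of_ball (hb : ∀ j (t : ℂ), ‖t‖ < 1 → ‖f j t - 1‖ ≤ 7 * ‖t‖ ^ (j + 1))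
    {r : ℝ} (hr1 : r < 1) {N : ℕ} (hN : 7 * r ^ (N + 1) ≤ 1 / 2)
    {t : ℂ} (ht : ‖t‖ ≤ r) : Multipliable fun j => f j t :=
  ((tail_multipliable hb hr1 hN ht).hasProd.prod_range_mul).multipliable

/-- Full representation of the product. -/
lemma prod_rep (hb : ∀ j (t : ℂ), ‖t‖ < 1 → ‖f j t - 1‖ ≤ 7 * ‖t‖ ^ (j + 1))
    {r : ℝ} (hr1 : r < 1) {N : ℕ} (hN : 7 * r ^ (N + 1) ≤ 1 / 2)
    {t : ℂ} (ht : ‖t‖ ≤ r) :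
    (∏' j : ℕ, f j t) = (∏ j ∈ Finset.range N, f j t) *
      Complex.exp (∑' j : ℕ, Complex.log (f (j + N) t)) := by
  rw [← tail_prod_eq hb hr1 hN ht]
  exact (Multipliable.prod_mul_tprod_nat_mul' (tail_multipliable hb hr1 hN ht)).symm


lemma slit_of_close {z : ℂ} (h : ‖z - 1‖ ≤ 1 / 2) : z ∈ Complex.slitPlane := by
  rw [Complex.mem_slitPlane_iff]
  left
  have h1 : |(z - 1).re| ≤ ‖z - 1‖ := Complex.abs_re_le_norm _
  have h2 : (z - 1).re = z.re - 1 := by simp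
  rw [h2] at h1
  have := abs_le.mp (h1.trans h)
  linarith [this.1]

lemma fin_diff (hd : ∀ j, Differentiable ℂ (f j)) (N : ℕ) :
    Differentiable ℂ (fun t => ∏ j ∈ Finset.range N, f j t) := by
  induction N with
  | zero => simpa using differentiable_const (1 : ℂ)
  | succ n ih =>
      simp only [Finset.prod_range_succ]
      exact ih.mul (hd n)

lemma diff_tprod (hd : ∀ j, Differentiable ℂ (f j))
    (hb : ∀ j (t : ℂ), ‖t‖ < 1 → ‖f j t - 1‖ ≤ 7 * ‖t‖ ^ (j + 1)) :
    DifferentiableOn ℂ (fun t => ∏' j : ℕ, f j t) (Metric.ball (0 : ℂ) 1) := by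
  intro t₀ ht₀
  rw [Metric.mem_ball, dist_zero_right] at ht₀
  set r : ℝ := (‖t₀‖ + 1) / 2 with hrdef
  have hr0 : 0 ≤ r := by positivity
  have hr1 : r < 1 := by rw [hrdef]; linarith
  have htr : ‖t₀‖ < r := by rw [hrdef]; linarith [norm_nonneg t₀]
  obtain ⟨N₀, hN₀⟩ := exists_pow_lt_of_lt_one (show (0:ℝ) < 1/14 by norm_num) hr1
  have hN : 7 * r ^ (N₀ + 1) ≤ 1 / 2 := by
    have h1 : r ^ (N₀ + 1) ≤ r ^ N₀ := pow_le_pow_of_le_one hr0 hr1.le (by omega)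
    nlinarith
  -- the tail log sum is differentiable on ball 0 r
  have hS : DifferentiableOn ℂ (fun t => ∑' j : ℕ, Complex.log (f (j + N₀) t))
      (Metric.ball (0 : ℂ) r) := by
    refine TendstoLocallyUniformlyOn.differentiableOn
      (TendstoUniformlyOn.tendstoLocallyUniformlyOn
        (tendstoUniformlyOn_tsum (u := fun j => 3 / 2 * (7 * r ^ (N₀ + 1)) * r ^ j)
          ((summable_geometric_of_lt_one hr0 hr1).mul_left _) ?_))
      ?_ Metric.isOpen_ball
    · intro j x hx
      rw [Metric.mem_ball, dist_zero_right] at hx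
      exact tail_log_bound hb hr1 hN hx.le j
    · filter_upwards with n
      intro x hx
      rw [Metric.mem_ball, dist_zero_right] at hx
      refine DifferentiableWithinAt.fun_sum fun j _ => ?_
      refine DifferentiableAt.differentiableWithinAt ?_
      exact ((hd (j + N₀)).differentiableAt).clog
        (slit_of_close (tail_bound hb hr1 hN hx.le j).2)
  have hfin : Differentiable ℂ (fun t => ∏ j ∈ Finset.range N₀, f j t) := fin_diff hd N₀
  have heq : Set.EqOn (fun t => ∏' j : ℕ, f j t)
      (fun t => (∏ j ∈ Finset.range N₀, f j t) *
        Complex.exp (∑' j : ℕ, Complex.log (f (j + N₀) t))) (Metric.ball (0 : ℂ) r) := by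
    intro x hx
    rw [Metric.mem_ball, dist_zero_right] at hx
    exact prod_rep hb hr1 hN hx.le
  have hdiff : DifferentiableOn ℂ (fun t => ∏' j : ℕ, f j t) (Metric.ball (0 : ℂ) r) :=
    (((hfin.differentiableOn).mul (hS.cexp)).congr heq)
  exact (hdiff.differentiableAt
    (Metric.isOpen_ball.mem_nhds (by rwa [Metric.mem_ball, dist_zero_right]))).differentiableWithinAt

end Machinery


section Coeff

lemma coeff_eq_zero_of_bound :
    ∀ (n : ℕ) (f : ℂ → ℂ) (p : FormalMultilinearSeries ℂ ℂ ℂ) (C : ℝ),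
      HasFPowerSeriesAt f p 0 → (∀ᶠ t in 𝓝[≠] (0:ℂ), ‖f t‖ ≤ C * ‖t‖ ^ n) →
      ∀ k < n, p.coeff k = 0 := by
  intro n
  induction n with
  | zero => exact fun f p C _ _ k hk => absurd hk (by omega)
  | succ n ih =>
    intro f p C hp hC k hk
    have hf0 : f 0 = 0 := by
      have h1 : Filter.Tendsto f (𝓝[≠] (0:ℂ)) (𝓝 (f 0)) :=
        hp.continuousAt.continuousWithinAt.tendsto
      have h2 : Filter.Tendsto f (𝓝[≠] (0:ℂ)) (𝓝 0) := by
        apply squeeze_zero_norm' hC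
        have h3 : Filter.Tendsto (fun t : ℂ => C * ‖t‖ ^ (n + 1)) (𝓝 0) (𝓝 (C * ‖(0:ℂ)‖ ^ (n+1))) :=
          (continuous_const.mul (continuous_norm.pow (n+1))).tendsto 0
        simp only [norm_zero, zero_pow (Nat.succ_ne_zero n), mul_zero] at h3
        exact h3.mono_left nhdsWithin_le_nhds
      exact tendsto_nhds_unique h1 h2
    match k, hk with
    | 0, _ =>
      have h := hp.coeff_zero (1 : Fin 0 → ℂ)
      show p.coeff 0 = 0
      rw [show p.coeff 0 = p 0 1 from rfl, h, hf0]
    | (j+1), hk =>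
      have hq := hp.has_fpower_series_dslope_fslope
      have hbound : ∀ᶠ t in 𝓝[≠] (0:ℂ), ‖dslope f 0 t‖ ≤ C * ‖t‖ ^ n := by
        filter_upwards [hC, self_mem_nhdsWithin] with t h1 h2
        have ht : t ≠ 0 := h2
        have htn : ‖t‖ ≠ 0 := norm_ne_zero_iff.mpr ht
        rw [dslope_of_ne _ ht]
        have hslope : slope f 0 t = t⁻¹ * f t := by
          simp [slope, hf0]
        rw [hslope, norm_mul, norm_inv]
        calc ‖t‖⁻¹ * ‖f t‖ ≤ ‖t‖⁻¹ * (C * ‖t‖ ^ (n + 1)) := by gcongr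
          _ = C * ‖t‖ ^ n := by
              rw [pow_succ,
                show ‖t‖⁻¹ * (C * (‖t‖ ^ n * ‖t‖)) = (‖t‖ * ‖t‖⁻¹) * (C * ‖t‖ ^ n) from by ring,
                mul_inv_cancel₀ htn, one_mul]
      have := ih (dslope f 0) p.fslope C hq hbound j (by omega)
      rwa [FormalMultilinearSeries.coeff_fslope] at this

lemma iteratedDeriv_of_series {f : ℂ → ℂ} {p : FormalMultilinearSeries ℂ ℂ ℂ}
    (hp : HasFPowerSeriesAt f p 0) (n : ℕ) :
    iteratedDeriv n f 0 = (n.factorial : ℂ) * p.coeff n := by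
  obtain ⟨r, hr⟩ := hp
  have h := hr.factorial_smul (1 : ℂ) n
  rw [iteratedDeriv_eq_iteratedFDeriv, ← h]
  have hc : p n (fun _ => 1) = p.coeff n := rfl
  rw [hc, nsmul_eq_mul]

end Coeff


section Specific

noncomputable def F1 (t : ℂ) : ℂ := ∏' j : ℕ, f1 j t
noncomputable def F2 (t : ℂ) : ℂ := ∏' j : ℕ, f2 j t
noncomputable def gg (t : ℂ) : ℂ := t * F1 t ^ 4 * F2 t ^ 4
noncomputable def Phi (t : ℂ) : ℂ := t * f1 0 t ^ 4 * (f2 0 t * f2 1 t) ^ 4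
noncomputable def Poly (t : ℂ) : ℂ := t + 8 * t ^ 2 + 28 * t ^ 3
noncomputable def RR (t : ℂ) : ℂ := (64 : ℂ) + 122 * t + 184 * t ^ 2 + 168 * t ^ 3 + 24 * t ^ 4 - 309 * t ^ 5 - 984 * t ^ 6 - 1728 * t ^ 7 - 2136 * t ^ 8 - 2182 * t ^ 9 - 752 * t ^ 10 + 2564 * t ^ 11 + 6008 * t ^ 12 + 10309 * t ^ 13 + 13424 * t ^ 14 + 9768 * t ^ 15 + 3120 * t ^ 16 - 7944 * t ^ 17 - 27216 * t ^ 18 - 37368 * t ^ 19 - 39024 * t ^ 20 - 36780 * t ^ 21 - 5520 * t ^ 22 + 32088 * t ^ 23 + 57040 * t ^ 24 + 95096 * t ^ 25 + 95632 * t ^ 26 + 51928 * t ^ 27 + 19088 * t ^ 28 - 55430 * t ^ 29 - 131712 * t ^ 30 - 133920 * t ^ 31 - 141072 * t ^ 32 - 101476 * t ^ 33 + 15136 * t ^ 34 + 76472 * t ^ 35 + 138688 * t ^ 36 + 197186 * t ^ 37 + 138688 * t ^ 38 + 76472 * t ^ 39 + 15136 * t ^ 40 - 101476 * t ^ 41 -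 141072 * t ^ 42 - 133920 * t ^ 43 - 131712 * t ^ 44 - 55430 * t ^ 45 + 19088 * t ^ 46 + 51928 * t ^ 47 + 95632 * t ^ 48 + 95096 * t ^ 49 + 57040 * t ^ 50 + 32088 * t ^ 51 - 5520 * t ^ 52 - 36780 * t ^ 53 - 39024 * t ^ 54 - 37368 * t ^ 55 - 27216 * t ^ 56 - 7944 * t ^ 57 + 3120 * t ^ 58 + 9768 * t ^ 59 + 13424 * t ^ 60 + 10309 * t ^ 61 + 6008 * t ^ 62 + 2564 * t ^ 63 - 752 * t ^ 64 - 2182 * t ^ 65 - 2136 * t ^ 66 - 1728 * t ^ 67 - 984 * t ^ 68 - 309 * t ^ 69 + 24 * t ^ 70 + 168 * t ^ 71 + 184 * t ^ 72 + 122 * t ^ 73 + 64 * t ^ 74 + 28 * t ^ 75 + 8 * t ^ 76 + 1 * t ^ 77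

lemma hb1 : ∀ j (t : ℂ), ‖t‖ < 1 → ‖f1 j t - 1‖ ≤ 7 * ‖t‖ ^ (j + 1) := fun j t h => f1_bound' j t h
lemma hb2 : ∀ j (t : ℂ), ‖t‖ < 1 → ‖f2 j t - 1‖ ≤ 7 * ‖t‖ ^ (j + 1) := fun j t h => f2_bound' j t h

lemma hr110 : (1/10 : ℝ) < 1 := by norm_num
lemma hN1 : 7 * (1/10 : ℝ) ^ (1 + 1) ≤ 1 / 2 := by norm_num
lemma hN2 : 7 * (1/10 : ℝ) ^ (2 + 1) ≤ 1 / 2 := by norm_num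

lemma gg_diff : DifferentiableOn ℂ gg (Metric.ball (0 : ℂ) 1) := by
  have h1 : DifferentiableOn ℂ F1 (Metric.ball (0 : ℂ) 1) := diff_tprod f1_diff hb1
  have h2 : DifferentiableOn ℂ F2 (Metric.ball (0 : ℂ) 1) := diff_tprod f2_diff hb2
  exact (differentiableOn_id.mul (h1.pow 4)).mul (h2.pow 4)

/-- tail sum for  from index 1 -/
noncomputable def S1 (t : ℂ) : ℂ := ∑' j : ℕ, Complex.log (f1 (j + 1) t)
/-- tail sum for  from index 2 -/
noncomputable def TT (t : ℂ) : ℂ := ∑' j : ℕ, Complex.log (f2 (j + 2) t)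

lemma geom_inv_le {t : ℂ} (ht : ‖t‖ ≤ 1/10) : (1 - ‖t‖ ^ 2)⁻¹ ≤ 100/99 := by
  have h0 : (0:ℝ) ≤ ‖t‖ := norm_nonneg t
  have h1 : ‖t‖ ^ 2 ≤ 1/100 := by nlinarith
  have h2 : (99:ℝ)/100 ≤ 1 - ‖t‖ ^ 2 := by linarith
  rw [show (100:ℝ)/99 = ((99:ℝ)/100)⁻¹ by norm_num]
  exact inv_anti₀ (by norm_num) h2

lemma S1_bound {t : ℂ} (ht : ‖t‖ ≤ 1/10) : ‖S1 t‖ ≤ 5 * ‖t‖ ^ 4 := by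
  have h0 : (0:ℝ) ≤ ‖t‖ := norm_nonneg t
  have hsq : ‖t‖ ^ 2 < 1 := by nlinarith
  have hgeom : HasSum (fun j : ℕ => 9/2 * ‖t‖ ^ 4 * (‖t‖ ^ 2) ^ j)
      (9/2 * ‖t‖ ^ 4 * (1 - ‖t‖ ^ 2)⁻¹) :=
    (hasSum_geometric_of_lt_one (by positivity) hsq).mul_left _
  have hterm : ∀ j : ℕ, ‖Complex.log (f1 (j + 1) t)‖ ≤ 9/2 * ‖t‖ ^ 4 * (‖t‖ ^ 2) ^ j := by
    intro j
    have hhalf : ‖f1 (j + 1) t - 1‖ ≤ 1/2 := (tail_bound hb1 hr110 hN1 ht j).2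
    have hlog : ‖Complex.log (1 + (f1 (j + 1) t - 1))‖ ≤ 3/2 * ‖f1 (j + 1) t - 1‖ :=
      Complex.norm_log_one_add_half_le_self hhalf
    rw [add_sub_cancel] at hlog
    refine hlog.trans ?_
    have hfb : ‖f1 (j + 1) t - 1‖ ≤ 3 * ‖t‖ ^ (2 * (j+1) + 2) :=
      f1_bound (j+1) t (ht.trans (by norm_num))
    have heq : (3:ℝ) / 2 * (3 * ‖t‖ ^ (2 * (j+1) + 2)) = 9/2 * ‖t‖ ^ 4 * (‖t‖ ^ 2) ^ j := by
      rw [← pow_mul]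
      rw [show 2 * (j+1) + 2 = 4 + 2 * j by ring, pow_add, pow_mul]
      ring
    calc (3:ℝ)/2 * ‖f1 (j + 1) t - 1‖ ≤ 3/2 * (3 * ‖t‖ ^ (2 * (j+1) + 2)) := by gcongr
      _ = 9/2 * ‖t‖ ^ 4 * (‖t‖ ^ 2) ^ j := heq
  refine (tsum_of_norm_bounded hgeom hterm).trans ?_
  have := geom_inv_le ht
  have h4 : (0:ℝ) ≤ ‖t‖ ^ 4 := by positivity
  nlinarith

lemma TT_bound {t : ℂ} (ht : ‖t‖ ≤ 1/10) : ‖TT t‖ ≤ 2 * ‖t‖ ^ 4 := by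
  have h0 : (0:ℝ) ≤ ‖t‖ := norm_nonneg t
  have hsq : ‖t‖ ^ 2 < 1 := by nlinarith
  have hgeom : HasSum (fun j : ℕ => 21/2 * ‖t‖ ^ 5 * (‖t‖ ^ 2) ^ j)
      (21/2 * ‖t‖ ^ 5 * (1 - ‖t‖ ^ 2)⁻¹) :=
    (hasSum_geometric_of_lt_one (by positivity) hsq).mul_left _
  have hterm : ∀ j : ℕ, ‖Complex.log (f2 (j + 2) t)‖ ≤ 21/2 * ‖t‖ ^ 5 * (‖t‖ ^ 2) ^ j := by
    intro j
    have hhalf : ‖f2 (j + 2) t - 1‖ ≤ 1/2 := (tail_bound hb2 hr110 hN2 ht j).2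
    have hlog : ‖Complex.log (1 + (f2 (j + 2) t - 1))‖ ≤ 3/2 * ‖f2 (j + 2) t - 1‖ :=
      Complex.norm_log_one_add_half_le_self hhalf
    rw [add_sub_cancel] at hlog
    refine hlog.trans ?_
    have hfb : ‖f2 (j + 2) t - 1‖ ≤ 7 * ‖t‖ ^ (2 * (j+2) + 1) :=
      f2_bound (j+2) t (ht.trans (by norm_num))
    have heq : (3:ℝ) / 2 * (7 * ‖t‖ ^ (2 * (j+2) + 1)) = 21/2 * ‖t‖ ^ 5 * (‖t‖ ^ 2) ^ j := by
      rw [show 2 * (j+2) + 1 = 5 + 2 * j by ring, pow_add, pow_mul]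
      ring
    calc (3:ℝ)/2 * ‖f2 (j + 2) t - 1‖ ≤ 3/2 * (7 * ‖t‖ ^ (2 * (j+2) + 1)) := by gcongr
      _ = 21/2 * ‖t‖ ^ 5 * (‖t‖ ^ 2) ^ j := heq
  refine (tsum_of_norm_bounded hgeom hterm).trans ?_
  have hgi := geom_inv_le ht
  have h5 : ‖t‖ ^ 5 ≤ (1/10) * ‖t‖ ^ 4 := by
    have : ‖t‖ ^ 5 = ‖t‖ ^ 4 * ‖t‖ := by ring
    rw [this]
    nlinarith [pow_nonneg h0 4]
  have h4 : (0:ℝ) ≤ ‖t‖ ^ 4 := by positivity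
  have h5' : (0:ℝ) ≤ ‖t‖ ^ 5 := by positivity
  nlinarith

lemma gg_rep {t : ℂ} (ht : ‖t‖ ≤ 1/10) :
    gg t = Phi t * Complex.exp (4 * S1 t + 4 * TT t) := by
  have hF1 : F1 t = f1 0 t * Complex.exp (S1 t) := by
    rw [F1, prod_rep hb1 hr110 hN1 ht, Finset.prod_range_one, S1]
  have hsumT : Summable (fun n : ℕ => Complex.log (f2 (n + 1 + 1) t)) :=
    (tail_log_summable hb2 hr110 hN2 ht).congr
      (fun n => congrArg (fun k : ℕ => Complex.log (f2 k t)) (by omega : n + 2 = n + 1 + 1))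
  have hsum2 : (∑' j : ℕ, Complex.log (f2 (j + 1) t)) = Complex.log (f2 1 t) + TT t := by
    rw [tsum_eq_zero_add' (f := fun j : ℕ => Complex.log (f2 (j + 1) t)) hsumT]
    congr 1
  have hF2 : F2 t = f2 0 t * (f2 1 t * Complex.exp (TT t)) := by
    rw [F2, prod_rep hb2 hr110 hN1 ht, Finset.prod_range_one, hsum2, Complex.exp_add,
      Complex.exp_log (tail_ne_zero hb2 hr110 hN1 ht 0)]
  have hexp : Complex.exp (S1 t) ^ 4 * Complex.exp (TT t) ^ 4
      = Complex.exp (4 * S1 t + 4 * TT t) := by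
    rw [← Complex.exp_nat_mul, ← Complex.exp_nat_mul, ← Complex.exp_add]
    norm_num
  rw [gg, hF1, hF2, Phi, ← hexp]
  ring

lemma norm_f_le {t : ℂ} (j : ℕ) (ht : ‖t‖ ≤ 1/10) (h : ℂ → ℂ)
    (hb : ‖h t - 1‖ ≤ 7 * ‖t‖ ^ (j + 1)) : ‖h t‖ ≤ 2 := by
  have h0 : (0:ℝ) ≤ ‖t‖ := norm_nonneg t
  have h1 : ‖t‖ ^ (j+1) ≤ 1 := pow_le_one₀ h0 (ht.trans (by norm_num))
  have h1' : ‖t‖ ^ (j+1) ≤ ‖t‖ ^ 1 := pow_le_pow_of_le_one h0 (ht.trans (by norm_num)) (by omega)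
  have h2' : ‖t‖ ^ 1 ≤ 1/10 := by simpa using ht
  calc ‖h t‖ = ‖h t - 1 + 1‖ := by norm_num
    _ ≤ ‖h t - 1‖ + ‖(1:ℂ)‖ := norm_add_le _ _
    _ ≤ 7 * (1/10) + 1 := by
        rw [norm_one]
        gcongr
        linarith
    _ ≤ 2 := by norm_num

lemma Phi_norm_le {t : ℂ} (ht : ‖t‖ ≤ 1/10) : ‖Phi t‖ ≤ 4096 := by
  have h0 : (0:ℝ) ≤ ‖t‖ := norm_nonneg t
  have ht1 : ‖t‖ < 1 := lt_of_le_of_lt ht (by norm_num)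
  have n1 : ‖f1 0 t‖ ≤ 2 := norm_f_le 0 ht (f1 0) (hb1 0 t ht1)
  have n2 : ‖f2 0 t‖ ≤ 2 := norm_f_le 0 ht (f2 0) (hb2 0 t ht1)
  have n3 : ‖f2 1 t‖ ≤ 2 := norm_f_le 1 ht (f2 1) (hb2 1 t ht1)
  have : ‖Phi t‖ = ‖t‖ * ‖f1 0 t‖ ^ 4 * (‖f2 0 t‖ * ‖f2 1 t‖) ^ 4 := by
    rw [Phi]; simp [norm_mul, norm_pow]
  rw [this]
  have h2 : ‖t‖ ≤ 1 := ht.trans (by norm_num)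
  calc ‖t‖ * ‖f1 0 t‖ ^ 4 * (‖f2 0 t‖ * ‖f2 1 t‖) ^ 4
      ≤ 1 * 2 ^ 4 * (2 * 2) ^ 4 := by
        gcongr <;> positivity
    _ ≤ 4096 := by norm_num

lemma gg_sub_Phi_bound {t : ℂ} (ht : ‖t‖ ≤ 1/10) :
    ‖gg t - Phi t‖ ≤ 229376 * ‖t‖ ^ 4 := by
  have h0 : (0:ℝ) ≤ ‖t‖ := norm_nonneg t
  have hE : ‖4 * S1 t + 4 * TT t‖ ≤ 28 * ‖t‖ ^ 4 := by
    have h1 := S1_bound ht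
    have h2 := TT_bound ht
    calc ‖4 * S1 t + 4 * TT t‖ ≤ ‖4 * S1 t‖ + ‖4 * TT t‖ := norm_add_le _ _
      _ = 4 * ‖S1 t‖ + 4 * ‖TT t‖ := by simp [norm_mul]
      _ ≤ 4 * (5 * ‖t‖ ^ 4) + 4 * (2 * ‖t‖ ^ 4) := by gcongr
      _ = 28 * ‖t‖ ^ 4 := by ring
  have hE1 : ‖4 * S1 t + 4 * TT t‖ ≤ 1 := by
    refine hE.trans ?_
    have : ‖t‖ ^ 4 ≤ (1/10) ^ 4 := by gcongr
    nlinarith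
  have hexp : ‖Complex.exp (4 * S1 t + 4 * TT t) - 1‖ ≤ 2 * ‖4 * S1 t + 4 * TT t‖ := by
    have := Complex.norm_exp_sub_one_le (x := 4 * S1 t + 4 * TT t) hE1
    exact this
  have hrw : gg t - Phi t = Phi t * (Complex.exp (4 * S1 t + 4 * TT t) - 1) := by
    rw [gg_rep ht]; ring
  rw [hrw, norm_mul]
  have hexp' : ‖Complex.exp (4 * S1 t + 4 * TT t) - 1‖ ≤ 56 * ‖t‖ ^ 4 := by
    refine hexp.trans ?_
    nlinarith
  calc ‖Phi t‖ * ‖Complex.exp (4 * S1 t + 4 * TT t) - 1‖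
      ≤ 4096 * (56 * ‖t‖ ^ 4) :=
        mul_le_mul (Phi_norm_le ht) hexp' (norm_nonneg _) (by norm_num)
    _ = 229376 * ‖t‖ ^ 4 := by ring

lemma Phi_sub_Poly (t : ℂ) : Phi t - Poly t = t ^ 4 * RR t := by
  rw [Phi, Poly, RR, f1, f2, f2]
  norm_num
  ring

end Specific


section PolyDeriv

lemma Poly_hasDeriv (t : ℂ) : HasDerivAt Poly (1 + 16 * t + 84 * t ^ 2) t := by
  unfold Poly
  have h := ((hasDerivAt_id t).add
    ((hasDerivAt_pow 2 t).const_mul (8:ℂ))).add ((hasDerivAt_pow 3 t).const_mul (28:ℂ))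
  exact h.congr_deriv (by push_cast; ring)

lemma deriv_Poly : deriv Poly = fun t : ℂ => 1 + 16 * t + 84 * t ^ 2 :=
  funext fun t => (Poly_hasDeriv t).deriv

lemma deriv_P2 : deriv (fun t : ℂ => 1 + 16 * t + 84 * t ^ 2) = fun t : ℂ => 16 + 168 * t := by
  funext t
  have h := (((hasDerivAt_const t (1:ℂ)).add ((hasDerivAt_id t).const_mul (16:ℂ))).add
    ((hasDerivAt_pow 2 t).const_mul (84:ℂ)))
  have h2 : HasDerivAt (fun t : ℂ => 1 + 16 * t + 84 * t ^ 2) (16 + 168 * t) t := by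
    exact h.congr_deriv (by push_cast; ring)
  exact h2.deriv

lemma deriv_P3 : deriv (fun t : ℂ => 16 + 168 * t) = fun _ : ℂ => 168 := by
  funext t
  have h2 : HasDerivAt (fun t : ℂ => 16 + 168 * t) 168 t := by
    have h := (hasDerivAt_const t (16:ℂ)).add ((hasDerivAt_id t).const_mul (168:ℂ))
    exact h.congr_deriv (by ring)
  exact h2.deriv

lemma iD0 : iteratedDeriv 0 Poly 0 = 0 := by
  rw [iteratedDeriv_zero]; unfold Poly; ring

lemma iD1 : iteratedDeriv 1 Poly 0 = 1 := by
  rw [iteratedDeriv_one, deriv_Poly]; norm_num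

lemma iD2 : iteratedDeriv 2 Poly 0 = 16 := by
  rw [show (2:ℕ) = 1 + 1 from rfl, iteratedDeriv_succ', deriv_Poly, iteratedDeriv_one, deriv_P2]
  norm_num

lemma iD3 : iteratedDeriv 3 Poly 0 = 168 := by
  rw [show (3:ℕ) = 1 + 1 + 1 from rfl, iteratedDeriv_succ', deriv_Poly, iteratedDeriv_succ',
    deriv_P2, iteratedDeriv_one, deriv_P3]

end PolyDeriv

section Main

lemma RR_cont : Continuous RR := by unfold RR; fun_prop

lemma iteratedDeriv_gg_eq_Poly : ∀ k < 4, iteratedDeriv k gg 0 = iteratedDeriv k Poly 0 := by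
  have hAg : AnalyticAt ℂ gg 0 := gg_diff.analyticAt (Metric.ball_mem_nhds 0 one_pos)
  have hPd : Differentiable ℂ Poly := by unfold Poly; fun_prop
  have hAP : AnalyticAt ℂ Poly 0 := hPd.analyticAt 0
  obtain ⟨p, hp⟩ := hAg
  obtain ⟨q, hq⟩ := hAP
  have hsub : HasFPowerSeriesAt (gg - Poly) (p - q) 0 := hp.sub hq
  have hRev : ∀ᶠ t in 𝓝 (0:ℂ), ‖RR t‖ ≤ ‖RR 0‖ + 1 :=
    (((RR_cont.tendsto 0).norm).eventually_lt_const (lt_add_one ‖RR 0‖)).mono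
      fun t ht => ht.le
  have hCb : ∀ᶠ t in 𝓝[≠] (0:ℂ), ‖(gg - Poly) t‖ ≤ (229376 + (‖RR 0‖ + 1)) * ‖t‖ ^ 4 := by
    refine Filter.Eventually.filter_mono nhdsWithin_le_nhds ?_
    filter_upwards [hRev,
      Filter.eventually_mem_set.mpr (Metric.ball_mem_nhds (0:ℂ) (show (0:ℝ) < 1/10 by norm_num))]
      with t h1 h2
    rw [Metric.mem_ball, dist_zero_right] at h2
    have hb := gg_sub_Phi_bound h2.le
    have hid : gg t - Poly t = (gg t - Phi t) + t ^ 4 * RR t := by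
      rw [← Phi_sub_Poly t]; ring
    calc ‖(gg - Poly) t‖ = ‖(gg t - Phi t) + t ^ 4 * RR t‖ := by rw [Pi.sub_apply, hid]
      _ ≤ ‖gg t - Phi t‖ + ‖t ^ 4 * RR t‖ := norm_add_le _ _
      _ ≤ 229376 * ‖t‖ ^ 4 + ‖t‖ ^ 4 * (‖RR 0‖ + 1) := by
          rw [norm_mul, norm_pow]
          gcongr
      _ = (229376 + (‖RR 0‖ + 1)) * ‖t‖ ^ 4 := by ring
  have hco := coeff_eq_zero_of_bound 4 (gg - Poly) (p - q) (229376 + (‖RR 0‖ + 1)) hsub hCb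
  intro k hk
  have hc : p.coeff k = q.coeff k := by
    have h0 := hco k hk
    have h2 : (p - q).coeff k = p.coeff k - q.coeff k := by
      show (p - q) k 1 = p k 1 - q k 1
      have hpq : (p - q) k = p k - q k := rfl
      rw [hpq, ContinuousMultilinearMap.sub_apply]
    rw [h2] at h0
    exact sub_eq_zero.mp h0
  rw [iteratedDeriv_of_series hp k, iteratedDeriv_of_series hq k, hc]

end Main

end Eps2Aux


namespace Eps2Aux

lemma qq_eq (τ : ℂ) : qq τ = qh τ ^ 2 := by
  rw [qq, qh, ← Complex.exp_nat_mul]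
  congr 1
  push_cast
  ring

lemma exp4 (τ : ℂ) : Complex.exp (↑π * Complex.I * τ / 4) ^ 4 = qh τ := by
  rw [qh, ← Complex.exp_nat_mul]
  congr 1
  push_cast
  ring

lemma gg_qh (τ : ℂ) : gg (qh τ) = epsilon2 τ := by
  have h1 : F1 (qh τ) = ∏' j : ℕ, ((1 - qq τ ^ (j + 1)) * (1 + qq τ ^ (j + 1)) ^ 2) := by
    rw [F1]
    exact tprod_congr fun j => by rw [f1, qq_eq]
  have h2 : F2 (qh τ) = ∏' j : ℕ, ((1 - qq τ ^ (j + 1)) * (1 + qh τ ^ (2 * j + 1)) ^ 2) := by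
    rw [F2]
    exact tprod_congr fun j => by rw [f2, qq_eq]
  have ht1 : theta1 τ ^ 4 = 16 * qh τ *
      (∏' j : ℕ, ((1 - qq τ ^ (j + 1)) * (1 + qq τ ^ (j + 1)) ^ 2)) ^ 4 := by
    rw [theta1, mul_pow, mul_pow, exp4]
    ring
  rw [gg, h1, h2, epsilon2, ht1, theta3]
  field_simp

end Eps2Aux

/-- The expansion of `ε₂` in the variable `t = q^{1/2} = e^{πiτ}` begins
`ε₂ = q^{1/2} + 8q + 28q^{3/2} + ⋯`: `ε₂` is a holomorphic function of `t` on the punctured unit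
disc extending holomorphically to `t = 0`, and its Taylor coefficients at `t = 0` in degrees
`0`, `1`, `2`, `3` are `0`, `1`, `8`, `28`. -/
theorem epsilon2_halfq_expansion :
    ∃ g : ℂ → ℂ, DifferentiableOn ℂ g (Metric.ball (0 : ℂ) 1) ∧
      (∀ τ : ℂ, 0 < τ.im → g (qh τ) = epsilon2 τ) ∧
      g 0 = 0 ∧
      iteratedDeriv 1 g 0 / (Nat.factorial 1 : ℂ) = 1 ∧
      iteratedDeriv 2 g 0 / (Nat.factorial 2 : ℂ) = 8 ∧
      iteratedDeriv 3 g 0 / (Nat.factorial 3 : ℂ) = 28 := by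
  refine ⟨Eps2Aux.gg, Eps2Aux.gg_diff, fun τ _ => Eps2Aux.gg_qh τ, ?_, ?_, ?_, ?_⟩
  · rw [Eps2Aux.gg]
    ring
  · rw [Eps2Aux.iteratedDeriv_gg_eq_Poly 1 (by norm_num), Eps2Aux.iD1]
    norm_num
  · rw [Eps2Aux.iteratedDeriv_gg_eq_Poly 2 (by norm_num), Eps2Aux.iD2]
    norm_num [Nat.factorial]
  · rw [Eps2Aux.iteratedDeriv_gg_eq_Poly 3 (by norm_num), Eps2Aux.iD3]
    norm_num [Nat.factorial]
end
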